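/- arXiv:2508.17758 — 8 statements merged into one kernel-verified Lean document; each statement's English description precedes it below -/
import Mathlib

section
/- The logic CN4K is paraconsistent: there is a CN4K model M and state w such that M, w ⊩+ p ∧ ∼p but M, w ⊮+ q, where p and q are distinct propositional variables. Hence p ∧ ∼p does not entail q. -/
/-- Formulas of the modal language with strong negation. -/
inductive MFm : Type where
  | pv : ℕ → MFm
  | neg : MFm → MFm
  | conj : MFm → MFm → MFm
  | disj : MFm → MFm → MFm
  | imp : MFm → MFm → MFm
  | box : MFm → MFm
  | dia : MFm → MFm

/-- `φ ↔ χ` abbreviates `(φ→χ) ∧ (χ→φ)`. -/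
def MFm.biimp (φ χ : MFm) : MFm := .conj (.imp φ χ) (.imp χ φ)

/-- A CN4K frame: a preordered set with four accessibility relations. -/
structure CN4KFrame where
  W : Type
  le : W → W → Prop
  le_refl : ∀ w, le w w
  le_trans : ∀ u v w, le u v → le v w → le u w
  Rpb : W → W → Prop
  Rnb : W → W → Prop
  Rpd : W → W → Prop
  Rnd : W → W → Prop

/-- A CN4K model over a frame: two persistent valuations. -/
structure CN4KModel (F : CN4KFrame) where
  vp : ℕ → F.W → Prop
  vn : ℕ → F.W → Prop
  vp_mono : ∀ n w w', F.le w w' → vp n w → vp n w'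
  vn_mono : ∀ n w w', F.le w w' → vn n w → vn n w'

/-- Support of truth (`b = true`) and falsity (`b = false`). -/
def CN4KModel.sup {F : CN4KFrame} (M : CN4KModel F) : MFm → Bool → F.W → Prop
  | .pv n, true, w => M.vp n w
  | .pv n, false, w => M.vn n w
  | .neg φ, b, w => M.sup φ (!b) w
  | .conj φ χ, true, w => M.sup φ true w ∧ M.sup χ true w
  | .conj φ χ, false, w => M.sup φ false w ∨ M.sup χ false w
  | .disj φ χ, true, w => M.sup φ true w ∨ M.sup χ true w
  | .disj φ χ, false, w => M.sup φ false w ∧ M.sup χ false w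
  | .imp φ χ, true, w => ∀ w', F.le w w' → M.sup φ true w' → M.sup χ true w'
  | .imp φ χ, false, w => M.sup φ true w ∧ M.sup χ false w
  | .box φ, true, w => ∀ w', F.le w w' → ∀ u, F.Rpb w' u → M.sup φ true u
  | .box φ, false, w => ∀ w', F.le w w' → ∃ u, F.Rnb w' u ∧ M.sup φ false u
  | .dia φ, true, w => ∀ w', F.le w w' → ∃ u, F.Rpd w' u ∧ M.sup φ true u
  | .dia φ, false, w => ∀ w', F.le w w' → ∀ u, F.Rnd w' u → M.sup φ false u

/-- Validity in CN4K: positive support at every state of every model. -/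
def CN4KValid (φ : MFm) : Prop :=
  ∀ (F : CN4KFrame) (M : CN4KModel F) (w : F.W), M.sup φ true w

/-- Semantic entailment in CN4K. -/
def CN4KEntails (Γ : Set MFm) (χ : MFm) : Prop :=
  ∀ (F : CN4KFrame) (M : CN4KModel F) (w : F.W),
    (∀ φ ∈ Γ, M.sup φ true w) → M.sup χ true w

def paraF : CN4KFrame where
  W := Unit
  le _ _ := True
  le_refl _ := trivial
  le_trans _ _ _ _ _ := trivial
  Rpb _ _ := False
  Rnb _ _ := False
  Rpd _ _ := False
  Rnd _ _ := False

def paraM : CN4KModel paraF where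
  vp n _ := n = 0
  vn n _ := n = 0
  vp_mono _ _ _ _ h := h
  vn_mono _ _ _ _ h := h

/-- Paraconsistency of CN4K: some model and state positively support `p ∧ ∼p`
but not `q` (for distinct variables `p`, `q`); hence `p ∧ ∼p` does not entail `q`. -/
theorem cn4k_paraconsistent :
    (∃ (F : CN4KFrame) (M : CN4KModel F) (w : F.W),
      M.sup (.conj (.pv 0) (.neg (.pv 0))) true w ∧ ¬ M.sup (.pv 1) true w) ∧
    ¬ CN4KEntails {MFm.conj (.pv 0) (.neg (.pv 0))} (.pv 1) := by
  constructor
  · exact ⟨paraF, paraM, (), ⟨rfl, rfl⟩, by simp [CN4KModel.sup, paraM]⟩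
  · intro h
    have := h paraF paraM () (by rintro φ rfl; exact ⟨rfl, rfl⟩)
    simp [CN4KModel.sup, paraM] at this
end

section
/- In every CN4K model whose frame satisfies R+□ = R-◇ and R+◇ = R-□ (a ⋈-birelational frame), the axiom □φ ↔ ∼◇∼φ is valid, i.e., at every state w, w ⊩+ □φ iff w ⊩+ ∼◇∼φ. -/
/-- On ⋈-birelational frames (`R⁺□ = R⁻◇` and `R⁺◇ = R⁻□`), the axiom
`□φ ↔ ∼◇∼φ` is valid. -/
theorem cn4k_bowtie_axiom (F : CN4KFrame) (h1 : F.Rpb = F.Rnd) (h2 : F.Rpd = F.Rnb)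
    (M : CN4KModel F) (φ : MFm) (w : F.W) :
    (M.sup (.box φ) true w ↔ M.sup (.neg (.dia (.neg φ))) true w) ∧
    M.sup (MFm.biimp (.box φ) (.neg (.dia (.neg φ)))) true w := by
  have key : ∀ v : F.W, M.sup (.box φ) true v ↔ M.sup (.neg (.dia (.neg φ))) true v := by
    intro v
    simp only [CN4KModel.sup, h1, Bool.not_true, Bool.not_false]

  refine ⟨key w, ?_, ?_⟩
  · intro w' _ h; exact (key w').mp h
  · intro w' _ h; exact (key w').mpr h
end

section
/- In every CN4K model whose frame satisfies R+□ = R+◇ (part of ±-birelationality), the axiom □(φ→χ) → (◇φ → ◇χ) is valid. -/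
/-- On frames with `R⁺□ = R⁺◇`, the axiom `□(φ→χ) → (◇φ → ◇χ)` is valid. -/
theorem cn4k_pm_axiom (F : CN4KFrame) (h : F.Rpb = F.Rpd)
    (M : CN4KModel F) (φ χ : MFm) (w : F.W) :
    M.sup (.imp (.box (.imp φ χ)) (.imp (.dia φ) (.dia χ))) true w := by
  intro w1 _ hbox w2 h12 hdia w3 h23
  obtain ⟨u, hu, hφ⟩ := hdia w3 h23
  refine ⟨u, hu, ?_⟩
  have himp := hbox w3 (F.le_trans _ _ _ h12 h23) u (by rw [h]; exact hu)
  exact himp u (F.le_refl u) hφ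
end

section
/- In every CN4K model whose frame satisfies R+□ = R-□ (part of ⋎-birelationality), the axiom □(φ→χ) → (∼□∼φ → ∼□∼χ) is valid. -/
/-- On frames with `R⁺□ = R⁻□`, the axiom `□(φ→χ) → (∼□∼φ → ∼□∼χ)` is valid. -/
theorem cn4k_curlyvee_axiom (F : CN4KFrame) (h : F.Rpb = F.Rnb)
    (M : CN4KModel F) (φ χ : MFm) (w : F.W) :
    M.sup (.imp (.box (.imp φ χ))
      (.imp (.neg (.box (.neg φ))) (.neg (.box (.neg χ))))) true w := by
  intro w1 hle1 hbox w2 hle2 hnφ w3 hle3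
  obtain ⟨u, hRu, hφu⟩ := hnφ w3 hle3
  have hRpu : F.Rpb w3 u := by rw [h]; exact hRu
  have himp := hbox w3 (F.le_trans _ _ _ hle2 hle3) u hRpu
  exact ⟨u, hRu, himp u (F.le_refl u) hφu⟩
end

section
/- There is a CN4K frame F2 over W = {w0, w1} with w0 ≤ w1, S+□ = S-□ = S-◇ = {(w0,w1),(w1,w1)}, S+◇ = ∅, and a model on F2 with w1 ⊩+ p, such that w1 ⊩+ ∼□∼p but w1 ⊮+ ◇p; hence ◇p ↔ ∼□∼p fails on F2 even though F2 validates ∼◇∼(φ→χ)→(◇φ→◇χ). -/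
/-- The frame F₂ over `W = {w₀, w₁}` (here `false` is w₀, `true` is w₁, with `w₀ ≤ w₁`):
`S⁺□ = S⁻□ = S⁻◇ = {(w₀,w₁),(w₁,w₁)}`, `S⁺◇ = ∅`. -/
def F2 : CN4KFrame where
  W := Bool
  le := (· ≤ ·)
  le_refl := fun w => le_refl w
  le_trans := fun _ _ _ h1 h2 => le_trans h1 h2
  Rpb := fun _ b => b = true
  Rnb := fun _ b => b = true
  Rpd := fun _ _ => False
  Rnd := fun _ b => b = true

/-- F₂ validates `⋎◇ := ∼◇∼(φ→χ)→(◇φ→◇χ)`, yet there is a model on F₂ with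
`w₁ ⊩⁺ p` in which `w₁ ⊩⁺ ∼□∼p` but `w₁ ⊮⁺ ◇p`; hence `◇p ↔ ∼□∼p` fails on F₂. -/
theorem cn4k_F2_separates :
    (∀ (M : CN4KModel F2) (φ χ : MFm) (w : F2.W),
      M.sup (.imp (.neg (.dia (.neg (.imp φ χ)))) (.imp (.dia φ) (.dia χ))) true w) ∧
    ∃ M : CN4KModel F2, M.vp 0 true ∧
      M.sup (.neg (.box (.neg (.pv 0)))) true true ∧
      ¬ M.sup (.dia (.pv 0)) true true ∧
      ¬ M.sup (MFm.biimp (.dia (.pv 0)) (.neg (.box (.neg (.pv 0))))) true true := by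
  constructor
  · intro M φ χ w
    intro w' _ _ w'' _ hdia
    exact absurd ((hdia w'' (le_refl _)).choose_spec.1) id
  · refine ⟨⟨fun n w => n = 0 ∧ true ≤ w, fun _ _ => False,
      fun n w w' h hv => ⟨hv.1, le_trans hv.2 h⟩,
      fun _ _ _ _ h => h⟩, ⟨rfl, le_refl _⟩, ?_, ?_, ?_⟩
    · intro w' _
      exact ⟨true, rfl, rfl, le_refl _⟩
    · intro h
      exact (h true (le_refl _)).choose_spec.1
    · intro ⟨_, h2⟩
      exact ((h2 true (le_refl _) (fun w' _ => ⟨true, rfl, rfl, le_refl _⟩)) true (le_refl _)).choose_spec.1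
end

section
/- If Γ ⊬_HCN4K φ, then there exists a saturated set Γ' ⊇ Γ such that Γ' ⊬_HCN4K φ, where a set Ξ is saturated if it is deductively closed under HCN4K-derivability and prime (ξ∨ξ' ∈ Ξ implies ξ ∈ Ξ or ξ' ∈ Ξ). -/
/-- Axiom schemes of the Hilbert calculus HCN4K: positive intuitionistic axioms,
strong-negation axioms of N4, and the modal axioms ⊤□, ∧□, ⊤◇, ∧◇. -/
inductive HAx : MFm → Prop
  | a1 (φ χ : MFm) : HAx (.imp φ (.imp χ φ))
  | a2 (φ χ ψ : MFm) :
      HAx (.imp (.imp φ (.imp χ ψ)) (.imp (.imp φ χ) (.imp φ ψ)))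
  | a3 (φ χ : MFm) : HAx (.imp φ (.imp χ (.conj φ χ)))
  | a4 (φ χ : MFm) : HAx (.imp (.conj φ χ) φ)
  | a5 (φ χ : MFm) : HAx (.imp (.conj φ χ) χ)
  | a6 (φ χ : MFm) : HAx (.imp φ (.disj φ χ))
  | a7 (φ χ : MFm) : HAx (.imp χ (.disj φ χ))
  | a8 (φ χ ψ : MFm) :
      HAx (.imp (.imp φ ψ) (.imp (.imp χ ψ) (.imp (.disj φ χ) ψ)))
  | dneg (φ : MFm) : HAx (MFm.biimp (.neg (.neg φ)) φ)
  | demConj (φ χ : MFm) :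
      HAx (MFm.biimp (.neg (.conj φ χ)) (.disj (.neg φ) (.neg χ)))
  | demDisj (φ χ : MFm) :
      HAx (MFm.biimp (.neg (.disj φ χ)) (.conj (.neg φ) (.neg χ)))
  | demImp (φ χ : MFm) :
      HAx (MFm.biimp (.neg (.imp φ χ)) (.conj φ (.neg χ)))
  | topBox (φ : MFm) : HAx (.box (.imp φ φ))
  | conjBox (φ χ : MFm) :
      HAx (.imp (.conj (.box φ) (.box χ)) (.box (.conj φ χ)))
  | topDia (φ : MFm) : HAx (.neg (.dia (.neg (.imp φ φ))))
  | conjDia (φ χ : MFm) :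
      HAx (.imp (.conj (.neg (.dia φ)) (.neg (.dia χ))) (.neg (.dia (.disj φ χ))))

/-- Derivability in HCN4K from a set of assumptions: modus ponens may use
assumptions; the modal monotonicity rules apply to theorems only. -/
inductive HProv : Set MFm → MFm → Prop
  | ax {Γ φ} : HAx φ → HProv Γ φ
  | hyp {Γ φ} : φ ∈ Γ → HProv Γ φ
  | mp {Γ φ χ} : HProv Γ (.imp φ χ) → HProv Γ φ → HProv Γ χ
  | rBox {Γ φ χ} : HProv ∅ (.imp φ χ) → HProv Γ (.imp (.box φ) (.box χ))
  | rDia {Γ φ χ} : HProv ∅ (.imp φ χ) → HProv Γ (.imp (.dia φ) (.dia χ))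
  | rBoxN {Γ φ χ} : HProv ∅ (.imp (.neg φ) (.neg χ)) →
      HProv Γ (.imp (.neg (.box φ)) (.neg (.box χ)))
  | rDiaN {Γ φ χ} : HProv ∅ (.imp (.neg φ) (.neg χ)) →
      HProv Γ (.imp (.neg (.dia φ)) (.neg (.dia χ)))

/-- A set is saturated if it is deductively closed and prime. -/
def Saturated (Ξ : Set MFm) : Prop :=
  (∀ φ, HProv Ξ φ → φ ∈ Ξ) ∧
  (∀ φ χ, MFm.disj φ χ ∈ Ξ → φ ∈ Ξ ∨ χ ∈ Ξ)

theorem HProv.mono {Γ : Set MFm} {φ : MFm} (h : HProv Γ φ) :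
    ∀ {Δ : Set MFm}, Γ ⊆ Δ → HProv Δ φ := by
  induction h with
  | ax a => exact fun _ => .ax a
  | hyp m => exact fun hs => .hyp (hs m)
  | mp _ _ ih1 ih2 => exact fun hs => .mp (ih1 hs) (ih2 hs)
  | rBox h0 => exact fun _ => .rBox h0
  | rDia h0 => exact fun _ => .rDia h0
  | rBoxN h0 => exact fun _ => .rBoxN h0
  | rDiaN h0 => exact fun _ => .rDiaN h0

theorem HProv.id (Γ : Set MFm) (ψ : MFm) : HProv Γ (.imp ψ ψ) :=
  .mp (.mp (.ax (HAx.a2 ψ (.imp ψ ψ) ψ)) (.ax (HAx.a1 ψ (.imp ψ ψ))))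
    (.ax (HAx.a1 ψ ψ))

theorem HProv.deduction_aux {Δ : Set MFm} {φ : MFm} (h : HProv Δ φ) :
    ∀ {ψ : MFm} {Γ : Set MFm}, Δ = insert ψ Γ → HProv Γ (.imp ψ φ) := by
  induction h with
  | @ax _ φ a => exact fun {ψ Γ} _ => .mp (.ax (HAx.a1 φ ψ)) (.ax a)
  | @hyp _ φ m =>
    intro ψ Γ hE
    subst hE
    rcases Set.mem_insert_iff.mp m with rfl | m
    · exact HProv.id _ _
    · exact .mp (.ax (HAx.a1 φ ψ)) (.hyp m)
  | @mp _ χ φ _ _ ih1 ih2 =>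
    intro ψ Γ hE
    exact .mp (.mp (.ax (HAx.a2 ψ χ φ)) (ih1 hE)) (ih2 hE)
  | rBox h0 => exact fun {ψ Γ} _ => .mp (.ax (HAx.a1 _ ψ)) (.rBox h0)
  | rDia h0 => exact fun {ψ Γ} _ => .mp (.ax (HAx.a1 _ ψ)) (.rDia h0)
  | rBoxN h0 => exact fun {ψ Γ} _ => .mp (.ax (HAx.a1 _ ψ)) (.rBoxN h0)
  | rDiaN h0 => exact fun {ψ Γ} _ => .mp (.ax (HAx.a1 _ ψ)) (.rDiaN h0)

theorem HProv.deduction {Γ : Set MFm} {ψ φ : MFm}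
    (h : HProv (insert ψ Γ) φ) : HProv Γ (.imp ψ φ) :=
  HProv.deduction_aux h rfl

theorem HProv.chain_aux {Δ : Set MFm} {φ : MFm} (h : HProv Δ φ) :
    ∀ {c : Set (Set MFm)}, IsChain (· ⊆ ·) c → c.Nonempty → Δ = ⋃₀ c →
      ∃ Θ ∈ c, HProv Θ φ := by
  induction h with
  | ax a => exact fun _ hne _ => ⟨hne.choose, hne.choose_spec, .ax a⟩
  | hyp m =>
    intro c hc hne hE
    subst hE
    obtain ⟨Θ, hΘ, hm⟩ := m
    exact ⟨Θ, hΘ, .hyp hm⟩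
  | mp _ _ ih1 ih2 =>
    intro c hc hne hE
    obtain ⟨Θ1, h1, p1⟩ := ih1 hc hne hE
    obtain ⟨Θ2, h2, p2⟩ := ih2 hc hne hE
    rcases hc.total h1 h2 with hle | hle
    · exact ⟨Θ2, h2, .mp (p1.mono hle) p2⟩
    · exact ⟨Θ1, h1, .mp p1 (p2.mono hle)⟩
  | rBox h0 => exact fun _ hne _ => ⟨hne.choose, hne.choose_spec, .rBox h0⟩
  | rDia h0 => exact fun _ hne _ => ⟨hne.choose, hne.choose_spec, .rDia h0⟩
  | rBoxN h0 => exact fun _ hne _ => ⟨hne.choose, hne.choose_spec, .rBoxN h0⟩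
  | rDiaN h0 => exact fun _ hne _ => ⟨hne.choose, hne.choose_spec, .rDiaN h0⟩

/-- Lindenbaum-style lemma: any set not deriving `φ` extends to a saturated set
not deriving `φ`. -/
theorem hcn4k_lindenbaum (Γ : Set MFm) (φ : MFm) (h : ¬ HProv Γ φ) :
    ∃ Γ' : Set MFm, Γ ⊆ Γ' ∧ Saturated Γ' ∧ ¬ HProv Γ' φ := by
  set S : Set (Set MFm) := {Δ | ¬ HProv Δ φ} with hS
  obtain ⟨M, hΓM, hMmax⟩ := zorn_subset_nonempty S
    (fun c hcS hchain hcne =>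
      ⟨⋃₀ c, fun hprov => by
          obtain ⟨Θ, hΘ, hp⟩ := HProv.chain_aux hprov hchain hcne rfl
          exact hcS hΘ hp,
        fun s hs => Set.subset_sUnion_of_mem hs⟩) Γ h
  have hMS : ¬ HProv M φ := hMmax.1
  have hmax : ∀ Δ, ¬ HProv Δ φ → M ⊆ Δ → Δ = M :=
    fun Δ hΔ hMΔ => (hMmax.2 hΔ hMΔ).antisymm hMΔ
  have key : ∀ ψ : MFm, HProv M ψ → ψ ∈ M := by
    intro ψ hψ
    have h1 : ¬ HProv (insert ψ M) φ := fun hprov =>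
      hMS (HProv.mp (HProv.deduction hprov) hψ)
    rw [← hmax _ h1 (Set.subset_insert ψ M)]
    exact Set.mem_insert ψ M
  refine ⟨M, hΓM, ⟨key, ?_⟩, hMS⟩
  intro ψ χ hdisj
  by_contra hcon
  push_neg at hcon
  obtain ⟨hψ, hχ⟩ := hcon
  have hψp : HProv (insert ψ M) φ := by
    by_contra hp
    exact hψ (by rw [← hmax _ hp (Set.subset_insert ψ M)]
                 exact Set.mem_insert ψ M)
  have hχp : HProv (insert χ M) φ := by
    by_contra hp
    exact hχ (by rw [← hmax _ hp (Set.subset_insert χ M)]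
                 exact Set.mem_insert χ M)
  exact hMS (HProv.mp
    (HProv.mp (HProv.mp (.ax (HAx.a8 ψ χ φ)) (HProv.deduction hψp))
      (HProv.deduction hχp))
    (.hyp hdisj))
end

section
/- Soundness of the Hilbert calculus: if Γ ⊢_HCN4K φ, then Γ ⊨_CN4K φ, i.e., in every CN4K model and state positively supporting all of Γ, φ is positively supported. -/
theorem sup_mono {F : CN4KFrame} (M : CN4KModel F) :
    ∀ (φ : MFm) (b : Bool) (w w' : F.W), F.le w w' → M.sup φ b w → M.sup φ b w' := by
  intro φ
  induction φ with
  | pv n =>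
    intro b w w' hle h
    cases b
    · exact M.vn_mono n w w' hle h
    · exact M.vp_mono n w w' hle h
  | neg φ ih =>
    intro b w w' hle h
    exact ih (!b) w w' hle h
  | conj φ χ ihφ ihχ =>
    intro b w w' hle h
    cases b with
    | true => exact ⟨ihφ true w w' hle h.1, ihχ true w w' hle h.2⟩
    | false =>
      cases h with
      | inl h => exact Or.inl (ihφ false w w' hle h)
      | inr h => exact Or.inr (ihχ false w w' hle h)
  | disj φ χ ihφ ihχ =>
    intro b w w' hle h
    cases b with
    | false => exact ⟨ihφ false w w' hle h.1, ihχ false w w' hle h.2⟩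
    | true =>
      cases h with
      | inl h => exact Or.inl (ihφ true w w' hle h)
      | inr h => exact Or.inr (ihχ true w w' hle h)
  | imp φ χ ihφ ihχ =>
    intro b w w' hle h
    cases b with
    | true => exact fun w'' hle' hφ => h w'' (F.le_trans w w' w'' hle hle') hφ
    | false => exact ⟨ihφ true w w' hle h.1, ihχ false w w' hle h.2⟩
  | box φ ih =>
    intro b w w' hle h
    cases b with
    | true => exact fun w'' hle' u hu => h w'' (F.le_trans w w' w'' hle hle') u hu
    | false => exact fun w'' hle' => h w'' (F.le_trans w w' w'' hle hle')
  | dia φ ih =>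
    intro b w w' hle h
    cases b with
    | true => exact fun w'' hle' => h w'' (F.le_trans w w' w'' hle hle')
    | false => exact fun w'' hle' u hu => h w'' (F.le_trans w w' w'' hle hle') u hu

theorem hax_valid {φ : MFm} (h : HAx φ) : CN4KValid φ := by
  intro F M w
  cases h with
  | a1 φ χ =>
    intro w1 h1 hφ w2 h2 _
    exact sup_mono M φ true w1 w2 h2 hφ
  | a2 φ χ ψ =>
    intro w1 h1 h w2 h2 hφχ w3 h3 hφ
    exact h w3 (F.le_trans w1 w2 w3 h2 h3) hφ w3 (F.le_refl w3) (hφχ w3 h3 hφ)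
  | a3 φ χ =>
    intro w1 h1 hφ w2 h2 hχ
    exact ⟨sup_mono M φ true w1 w2 h2 hφ, hχ⟩
  | a4 φ χ => exact fun w1 h1 h => h.1
  | a5 φ χ => exact fun w1 h1 h => h.2
  | a6 φ χ => exact fun w1 h1 h => Or.inl h
  | a7 φ χ => exact fun w1 h1 h => Or.inr h
  | a8 φ χ ψ =>
    intro w1 h1 hφψ w2 h2 hχψ w3 h3 hd
    cases hd with
    | inl h => exact hφψ w3 (F.le_trans w1 w2 w3 h2 h3) h
    | inr h => exact hχψ w3 h3 h
  | dneg φ => exact ⟨fun w1 _ h => h, fun w1 _ h => h⟩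
  | demConj φ χ => exact ⟨fun w1 _ h => h, fun w1 _ h => h⟩
  | demDisj φ χ => exact ⟨fun w1 _ h => h, fun w1 _ h => h⟩
  | demImp φ χ => exact ⟨fun w1 _ h => h, fun w1 _ h => h⟩
  | topBox φ => exact fun w1 _ u _ w2 _ h => h
  | conjBox φ χ =>
    intro w1 h1 h w2 h2 u hu
    exact ⟨h.1 w2 h2 u hu, h.2 w2 h2 u hu⟩
  | topDia φ => exact fun w1 _ u _ w2 _ h => h
  | conjDia φ χ =>
    intro w1 h1 h w2 h2 u hu
    exact ⟨h.1 w2 h2 u hu, h.2 w2 h2 u hu⟩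

/-- Soundness of HCN4K with respect to CN4K semantics. -/
theorem hcn4k_soundness (Γ : Set MFm) (φ : MFm) (h : HProv Γ φ) :
    CN4KEntails Γ φ := by
  induction h with
  | ax ha => exact fun F M w _ => hax_valid ha F M w
  | hyp hm => exact fun F M w hΓ => hΓ _ hm
  | mp h1 h2 ih1 ih2 =>
    intro F M w hΓ
    exact ih1 F M w hΓ w (F.le_refl w) (ih2 F M w hΓ)
  | rBox h ih =>
    intro F M w hΓ w1 h1 hbox w2 h2 u hu
    exact ih F M u (by simp) u (F.le_refl u) (hbox w2 h2 u hu)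
  | rDia h ih =>
    intro F M w hΓ w1 h1 hdia w2 h2
    obtain ⟨u, hu, hφ⟩ := hdia w2 h2
    exact ⟨u, hu, ih F M u (by simp) u (F.le_refl u) hφ⟩
  | rBoxN h ih =>
    intro F M w hΓ w1 h1 hbox w2 h2
    obtain ⟨u, hu, hφ⟩ := hbox w2 h2
    exact ⟨u, hu, ih F M u (by simp) u (F.le_refl u) hφ⟩
  | rDiaN h ih =>
    intro F M w hΓ w1 h1 hdia w2 h2 u hu
    exact ih F M u (by simp) u (F.le_refl u) (hdia w2 h2 u hu)
end

section
/- Disjunction property and constructive falsity for CN4K: if φ∨χ is valid in CN4K then φ is valid or χ is valid; and if ∼(φ∧χ) is valid in CN4K then ∼φ is valid or ∼χ is valid. -/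
namespace CN4Kaux

lemma sup_mono {F : CN4KFrame} (M : CN4KModel F) :
    ∀ (φ : MFm) (b : Bool) (w w' : F.W), F.le w w' → M.sup φ b w → M.sup φ b w' := by
  intro φ
  induction φ with
  | pv n =>
    intro b w w' hle h
    cases b
    · exact M.vn_mono n w w' hle h
    · exact M.vp_mono n w w' hle h
  | neg φ ih =>
    intro b w w' hle h
    exact ih (!b) w w' hle h
  | conj φ χ ihφ ihχ =>
    intro b w w' hle h
    cases b with
    | true => exact ⟨ihφ true w w' hle h.1, ihχ true w w' hle h.2⟩
    | false => exact h.imp (ihφ false w w' hle) (ihχ false w w' hle)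
  | disj φ χ ihφ ihχ =>
    intro b w w' hle h
    cases b with
    | true => exact h.imp (ihφ true w w' hle) (ihχ true w w' hle)
    | false => exact ⟨ihφ false w w' hle h.1, ihχ false w w' hle h.2⟩
  | imp φ χ ihφ ihχ =>
    intro b w w' hle h
    cases b with
    | true => exact fun u hu hφ => h u (F.le_trans w w' u hle hu) hφ
    | false => exact ⟨ihφ true w w' hle h.1, ihχ false w w' hle h.2⟩
  | box φ ih =>
    intro b w w' hle h
    cases b with
    | true => exact fun u hu v hv => h u (F.le_trans w w' u hle hu) v hv
    | false => exact fun u hu => h u (F.le_trans w w' u hle hu)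
  | dia φ ih =>
    intro b w w' hle h
    cases b with
    | true => exact fun u hu => h u (F.le_trans w w' u hle hu)
    | false => exact fun u hu v hv => h u (F.le_trans w w' u hle hu) v hv

def glueRel {A B : Type} (r1 : A → A → Prop) (r2 : B → B → Prop) :
    Option (A ⊕ B) → Option (A ⊕ B) → Prop
  | some (.inl x), some (.inl y) => r1 x y
  | some (.inr x), some (.inr y) => r2 x y
  | _, _ => False

def glueF (F1 F2 : CN4KFrame) : CN4KFrame where
  W := Option (F1.W ⊕ F2.W)
  le a b :=
    match a, b with
    | none, _ => True
    | some (.inl x), some (.inl y) => F1.le x y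
    | some (.inr x), some (.inr y) => F2.le x y
    | _, _ => False
  le_refl := by rintro (_ | x | x) <;> simp <;> first | exact F1.le_refl _ | exact F2.le_refl _
  le_trans := by
    rintro (_ | x | x) (_ | y | y) (_ | z | z) h1 h2 <;> simp_all
    · exact F1.le_trans _ _ _ h1 h2
    · exact F2.le_trans _ _ _ h1 h2
  Rpb := glueRel F1.Rpb F2.Rpb
  Rnb := glueRel F1.Rnb F2.Rnb
  Rpd := glueRel F1.Rpd F2.Rpd
  Rnd := glueRel F1.Rnd F2.Rnd

def glueM {F1 F2 : CN4KFrame} (M1 : CN4KModel F1) (M2 : CN4KModel F2) :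
    CN4KModel (glueF F1 F2) where
  vp n w :=
    match w with
    | none => False
    | some (.inl x) => M1.vp n x
    | some (.inr x) => M2.vp n x
  vn n w :=
    match w with
    | none => False
    | some (.inl x) => M1.vn n x
    | some (.inr x) => M2.vn n x
  vp_mono := by
    rintro n (_ | x | x) (_ | y | y) hle h <;> simp_all [glueF]
    · exact M1.vp_mono _ _ _ hle h
    · exact M2.vp_mono _ _ _ hle h
  vn_mono := by
    rintro n (_ | x | x) (_ | y | y) hle h <;> simp_all [glueF]
    · exact M1.vn_mono _ _ _ hle h
    · exact M2.vn_mono _ _ _ hle h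

lemma sup_inl {F1 F2 : CN4KFrame} (M1 : CN4KModel F1) (M2 : CN4KModel F2) :
    ∀ (φ : MFm) (b : Bool) (x : F1.W),
      (glueM M1 M2).sup φ b (some (.inl x)) ↔ M1.sup φ b x := by
  intro φ
  induction φ with
  | pv n => intro b x; cases b <;> simp [CN4KModel.sup, glueM]
  | neg φ ih => intro b x; exact ih (!b) x
  | conj φ χ ihφ ihχ =>
    intro b x; cases b <;> simp [CN4KModel.sup, ihφ, ihχ]
  | disj φ χ ihφ ihχ =>
    intro b x; cases b <;> simp [CN4KModel.sup, ihφ, ihχ]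
  | imp φ χ ihφ ihχ =>
    intro b x
    cases b with
    | false => simp [CN4KModel.sup, ihφ, ihχ]
    | true =>
      simp only [CN4KModel.sup]
      constructor
      · intro h y hy hφ
        exact (ihχ true y).mp (h (some (.inl y)) hy ((ihφ true y).mpr hφ))
      · rintro h (_ | y | y) hy hφ
        · exact absurd hy (by simp [glueF])
        · exact (ihχ true y).mpr (h y hy ((ihφ true y).mp hφ))
        · exact absurd hy (by simp [glueF])
  | box φ ih =>
    intro b x
    cases b with
    | true =>
      simp only [CN4KModel.sup]
      constructor
      · intro h y hy u hu
        exact (ih true u).mp (h (some (.inl y)) hy (some (.inl u)) hu)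
      · rintro h (_ | y | y) hy (_ | u | u) hu <;>
          first
          | exact hu.elim
          | exact hy.elim
          | exact (ih true u).mpr (h y hy u hu)
    | false =>
      simp only [CN4KModel.sup]
      constructor
      · intro h y hy
        obtain ⟨u, hu, hs⟩ := h (some (.inl y)) hy
        match u with
        | none => exact absurd hu (by simp [glueF, glueRel])
        | some (.inr u) => exact absurd hu (by simp [glueF, glueRel])
        | some (.inl u) => exact ⟨u, hu, (ih false u).mp hs⟩
      · rintro h (_ | y | y) hy
        · exact absurd hy (by simp [glueF])
        · obtain ⟨u, hu, hs⟩ := h y hy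
          exact ⟨some (.inl u), hu, (ih false u).mpr hs⟩
        · exact absurd hy (by simp [glueF])
  | dia φ ih =>
    intro b x
    cases b with
    | true =>
      simp only [CN4KModel.sup]
      constructor
      · intro h y hy
        obtain ⟨u, hu, hs⟩ := h (some (.inl y)) hy
        match u with
        | none => exact absurd hu (by simp [glueF, glueRel])
        | some (.inr u) => exact absurd hu (by simp [glueF, glueRel])
        | some (.inl u) => exact ⟨u, hu, (ih true u).mp hs⟩
      · rintro h (_ | y | y) hy
        · exact absurd hy (by simp [glueF])
        · obtain ⟨u, hu, hs⟩ := h y hy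
          exact ⟨some (.inl u), hu, (ih true u).mpr hs⟩
        · exact absurd hy (by simp [glueF])
    | false =>
      simp only [CN4KModel.sup]
      constructor
      · intro h y hy u hu
        exact (ih false u).mp (h (some (.inl y)) hy (some (.inl u)) hu)
      · rintro h (_ | y | y) hy (_ | u | u) hu <;>
          first
          | exact hu.elim
          | exact hy.elim
          | exact (ih false u).mpr (h y hy u hu)

lemma sup_inr {F1 F2 : CN4KFrame} (M1 : CN4KModel F1) (M2 : CN4KModel F2) :
    ∀ (φ : MFm) (b : Bool) (x : F2.W),
      (glueM M1 M2).sup φ b (some (.inr x)) ↔ M2.sup φ b x := by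
  intro φ
  induction φ with
  | pv n => intro b x; cases b <;> simp [CN4KModel.sup, glueM]
  | neg φ ih => intro b x; exact ih (!b) x
  | conj φ χ ihφ ihχ =>
    intro b x; cases b <;> simp [CN4KModel.sup, ihφ, ihχ]
  | disj φ χ ihφ ihχ =>
    intro b x; cases b <;> simp [CN4KModel.sup, ihφ, ihχ]
  | imp φ χ ihφ ihχ =>
    intro b x
    cases b with
    | false => simp [CN4KModel.sup, ihφ, ihχ]
    | true =>
      simp only [CN4KModel.sup]
      constructor
      · intro h y hy hφ
        exact (ihχ true y).mp (h (some (.inr y)) hy ((ihφ true y).mpr hφ))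
      · rintro h (_ | y | y) hy hφ
        · exact absurd hy (by simp [glueF])
        · exact absurd hy (by simp [glueF])
        · exact (ihχ true y).mpr (h y hy ((ihφ true y).mp hφ))
  | box φ ih =>
    intro b x
    cases b with
    | true =>
      simp only [CN4KModel.sup]
      constructor
      · intro h y hy u hu
        exact (ih true u).mp (h (some (.inr y)) hy (some (.inr u)) hu)
      · rintro h (_ | y | y) hy (_ | u | u) hu <;>
          first
          | exact hu.elim
          | exact hy.elim
          | exact (ih true u).mpr (h y hy u hu)
    | false =>
      simp only [CN4KModel.sup]
      constructor
      · intro h y hy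
        obtain ⟨u, hu, hs⟩ := h (some (.inr y)) hy
        match u with
        | none => exact absurd hu (by simp [glueF, glueRel])
        | some (.inl u) => exact absurd hu (by simp [glueF, glueRel])
        | some (.inr u) => exact ⟨u, hu, (ih false u).mp hs⟩
      · rintro h (_ | y | y) hy
        · exact absurd hy (by simp [glueF])
        · exact absurd hy (by simp [glueF])
        · obtain ⟨u, hu, hs⟩ := h y hy
          exact ⟨some (.inr u), hu, (ih false u).mpr hs⟩
  | dia φ ih =>
    intro b x
    cases b with
    | true =>
      simp only [CN4KModel.sup]
      constructor
      · intro h y hy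
        obtain ⟨u, hu, hs⟩ := h (some (.inr y)) hy
        match u with
        | none => exact absurd hu (by simp [glueF, glueRel])
        | some (.inl u) => exact absurd hu (by simp [glueF, glueRel])
        | some (.inr u) => exact ⟨u, hu, (ih true u).mp hs⟩
      · rintro h (_ | y | y) hy
        · exact absurd hy (by simp [glueF])
        · exact absurd hy (by simp [glueF])
        · obtain ⟨u, hu, hs⟩ := h y hy
          exact ⟨some (.inr u), hu, (ih true u).mpr hs⟩
    | false =>
      simp only [CN4KModel.sup]
      constructor
      · intro h y hy u hu
        exact (ih false u).mp (h (some (.inr y)) hy (some (.inr u)) hu)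
      · rintro h (_ | y | y) hy (_ | u | u) hu <;>
          first
          | exact hu.elim
          | exact hy.elim
          | exact (ih false u).mpr (h y hy u hu)

lemma key (b : Bool) (φ χ : MFm)
    (h : ∀ (F : CN4KFrame) (M : CN4KModel F) (w : F.W), M.sup φ b w ∨ M.sup χ b w) :
    (∀ (F : CN4KFrame) (M : CN4KModel F) (w : F.W), M.sup φ b w) ∨
      (∀ (F : CN4KFrame) (M : CN4KModel F) (w : F.W), M.sup χ b w) := by
  by_contra hc
  push_neg at hc
  obtain ⟨⟨F1, M1, w1, h1⟩, ⟨F2, M2, w2, h2⟩⟩ := hc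
  rcases h (glueF F1 F2) (glueM M1 M2) none with hd | hd
  · exact h1 ((sup_inl M1 M2 φ b w1).mp
      (sup_mono (glueM M1 M2) φ b none (some (.inl w1)) trivial hd))
  · exact h2 ((sup_inr M1 M2 χ b w2).mp
      (sup_mono (glueM M1 M2) χ b none (some (.inr w2)) trivial hd))

end CN4Kaux

/-- Disjunction property and constructive falsity property of CN4K:
if `φ∨χ` is valid then `φ` or `χ` is valid, and if `∼(φ∧χ)` is valid
then `∼φ` or `∼χ` is valid. -/
theorem cn4k_disjunction_and_constructive_falsity (φ χ : MFm) :
    (CN4KValid (.disj φ χ) → CN4KValid φ ∨ CN4KValid χ) ∧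
    (CN4KValid (.neg (.conj φ χ)) → CN4KValid (.neg φ) ∨ CN4KValid (.neg χ)) := by
  constructor
  · intro h
    exact CN4Kaux.key true φ χ (fun F M w => h F M w)
  · intro h
    exact CN4Kaux.key false φ χ (fun F M w => h F M w)
end
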